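/- The function (u, v, w) ↦ (1 − (u + v + w))·𝟙_{u+v+w ≤ 1}/(uv + uw + vw) is Lebesgue integrable on the cube [0,1]³; in particular the constant J := ∫_{[0,1]³} (1 − (u + v + w))·𝟙_{u+v+w ≤ 1}/(uv + uw + vw) du dv dw is finite. -/

import Mathlib

open MeasureTheory

lemma amgm3 {u v w : ℝ} (hu : 0 < u) (hv : 0 < v) (hw : 0 < w) :
    (u * v * w) ^ ((2:ℝ)/3) ≤ u * v + u * w + v * w := by
  have h := Real.geom_mean_le_arith_mean3_weighted (by norm_num : (0:ℝ) ≤ 1/3)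
    (by norm_num : (0:ℝ) ≤ 1/3) (by norm_num : (0:ℝ) ≤ 1/3)
    (mul_nonneg hu.le hv.le) (mul_nonneg hu.le hw.le) (mul_nonneg hv.le hw.le)
    (by norm_num)
  have key : (u * v * w) ^ ((2:ℝ)/3)
      = (u*v) ^ ((1:ℝ)/3) * (u*w) ^ ((1:ℝ)/3) * (v*w) ^ ((1:ℝ)/3) := by
    rw [← Real.mul_rpow (mul_nonneg hu.le hv.le) (mul_nonneg hu.le hw.le),
        ← Real.mul_rpow (by positivity) (mul_nonneg hv.le hw.le),
        show u*v*(u*w)*(v*w) = (u*v*w)^(2:ℕ) by ring,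
        ← Real.rpow_natCast (u*v*w) 2, ← Real.rpow_mul (by positivity)]
    norm_num
  rw [key]
  nlinarith [mul_nonneg hu.le hv.le, mul_nonneg hu.le hw.le, mul_nonneg hv.le hw.le]

lemma int_rpow23 : IntegrableOn (fun x : ℝ => x ^ (-(2:ℝ)/3)) (Set.Icc 0 1) volume := by
  rw [integrableOn_Icc_iff_integrableOn_Ioc]
  have h := intervalIntegral.intervalIntegrable_rpow' (a := (0:ℝ)) (b := 1) (r := -(2:ℝ)/3)
    (by norm_num)
  rwa [intervalIntegrable_iff_integrableOn_Ioc_of_le (by norm_num : (0:ℝ) ≤ 1)] at h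

lemma int_g : IntegrableOn
    (fun p : ℝ × ℝ × ℝ => p.1 ^ (-(2:ℝ)/3) * (p.2.1 ^ (-(2:ℝ)/3) * p.2.2 ^ (-(2:ℝ)/3)))
    (Set.Icc 0 1 ×ˢ Set.Icc 0 1 ×ˢ Set.Icc 0 1) volume := by
  have h1 := int_rpow23
  have h2 : IntegrableOn (fun q : ℝ × ℝ => q.1 ^ (-(2:ℝ)/3) * q.2 ^ (-(2:ℝ)/3))
      (Set.Icc 0 1 ×ˢ Set.Icc 0 1) volume := by
    rw [IntegrableOn, Measure.volume_eq_prod, ← Measure.prod_restrict]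
    exact Integrable.mul_prod h1 h1
  rw [IntegrableOn, Measure.volume_eq_prod, ← Measure.prod_restrict]
  exact Integrable.mul_prod h1 h2

theorem integrable_J_integrand :
    IntegrableOn
      (fun p : ℝ × ℝ × ℝ =>
        if p.1 + p.2.1 + p.2.2 ≤ 1 then
          (1 - (p.1 + p.2.1 + p.2.2)) / (p.1 * p.2.1 + p.1 * p.2.2 + p.2.1 * p.2.2)
        else 0)
      (Set.Icc 0 1 ×ˢ Set.Icc 0 1 ×ˢ Set.Icc 0 1) volume := by
  set S : Set (ℝ × ℝ × ℝ) := Set.Icc 0 1 ×ˢ Set.Icc 0 1 ×ˢ Set.Icc 0 1 with hS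
  have hmeasS : MeasurableSet S :=
    (measurableSet_Icc.prod (measurableSet_Icc.prod measurableSet_Icc))
  -- measurability
  have hmeas : AEStronglyMeasurable
      (fun p : ℝ × ℝ × ℝ =>
        if p.1 + p.2.1 + p.2.2 ≤ 1 then
          (1 - (p.1 + p.2.1 + p.2.2)) / (p.1 * p.2.1 + p.1 * p.2.2 + p.2.1 * p.2.2)
        else 0) (volume.restrict S) := by
    apply Measurable.aestronglyMeasurable
    apply Measurable.ite
    · exact measurableSet_le (by fun_prop) measurable_const
    · fun_prop
    · exact measurable_const
  -- a.e. coordinates nonzero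
  have h1 : ∀ᵐ p : ℝ × ℝ × ℝ, p.1 ≠ 0 := by
    have : volume {p : ℝ × ℝ × ℝ | p.1 = 0} = 0 := by
      have he : {p : ℝ × ℝ × ℝ | p.1 = 0} = ({0} : Set ℝ) ×ˢ (Set.univ : Set (ℝ × ℝ)) := by
        ext p; simp [Set.mem_prod]
      rw [he, Measure.volume_eq_prod, Measure.prod_prod]
      simp
    rw [ae_iff]; simp only [ne_eq, not_not]; exact this
  have h2 : ∀ᵐ p : ℝ × ℝ × ℝ, p.2.1 ≠ 0 := by
    have : volume {p : ℝ × ℝ × ℝ | p.2.1 = 0} = 0 := by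
      have he : {p : ℝ × ℝ × ℝ | p.2.1 = 0}
          = (Set.univ : Set ℝ) ×ˢ (({0} : Set ℝ) ×ˢ (Set.univ : Set ℝ)) := by
        ext p; simp [Set.mem_prod]
      rw [he, Measure.volume_eq_prod, Measure.prod_prod, Measure.volume_eq_prod,
        Measure.prod_prod]
      simp
    rw [ae_iff]; simp only [ne_eq, not_not]; exact this
  have h3 : ∀ᵐ p : ℝ × ℝ × ℝ, p.2.2 ≠ 0 := by
    have : volume {p : ℝ × ℝ × ℝ | p.2.2 = 0} = 0 := by
      have he : {p : ℝ × ℝ × ℝ | p.2.2 = 0}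
          = (Set.univ : Set ℝ) ×ˢ ((Set.univ : Set ℝ) ×ˢ ({0} : Set ℝ)) := by
        ext p; simp [Set.mem_prod]
      rw [he, Measure.volume_eq_prod, Measure.prod_prod, Measure.volume_eq_prod,
        Measure.prod_prod]
      simp
    rw [ae_iff]; simp only [ne_eq, not_not]; exact this
  have hbound : ∀ᵐ p : ℝ × ℝ × ℝ ∂(volume.restrict S),
      ‖if p.1 + p.2.1 + p.2.2 ≤ 1 then
          (1 - (p.1 + p.2.1 + p.2.2)) / (p.1 * p.2.1 + p.1 * p.2.2 + p.2.1 * p.2.2)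
        else 0‖ ≤ p.1 ^ (-(2:ℝ)/3) * (p.2.1 ^ (-(2:ℝ)/3) * p.2.2 ^ (-(2:ℝ)/3)) := by
    filter_upwards [ae_restrict_mem hmeasS, ae_restrict_of_ae h1, ae_restrict_of_ae h2,
      ae_restrict_of_ae h3] with p hp hp1 hp2 hp3
    obtain ⟨hu, hv, hw⟩ := hp
    have hu0 : 0 < p.1 := lt_of_le_of_ne hu.1 (Ne.symm hp1)
    have hv0 : 0 < p.2.1 := lt_of_le_of_ne hv.1 (Ne.symm hp2)
    have hw0 : 0 < p.2.2 := lt_of_le_of_ne hw.1 (Ne.symm hp3)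
    have hD : 0 < p.1 * p.2.1 + p.1 * p.2.2 + p.2.1 * p.2.2 := by positivity
    have hRHS : p.1 ^ (-(2:ℝ)/3) * (p.2.1 ^ (-(2:ℝ)/3) * p.2.2 ^ (-(2:ℝ)/3))
        = (p.1 * p.2.1 * p.2.2) ^ (-(2:ℝ)/3) := by
      rw [Real.mul_rpow (by positivity) hw0.le, Real.mul_rpow hu0.le hv0.le]
      ring
    rw [hRHS]
    by_cases hle : p.1 + p.2.1 + p.2.2 ≤ 1
    · rw [if_pos hle]
      have hnum : 0 ≤ 1 - (p.1 + p.2.1 + p.2.2) := by linarith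
      rw [Real.norm_eq_abs, abs_of_nonneg (div_nonneg hnum hD.le)]
      have key : (p.1 * p.2.1 * p.2.2) ^ ((2:ℝ)/3)
          ≤ p.1 * p.2.1 + p.1 * p.2.2 + p.2.1 * p.2.2 := amgm3 hu0 hv0 hw0
      have hpow : (0:ℝ) < (p.1 * p.2.1 * p.2.2) ^ ((2:ℝ)/3) := by positivity
      calc (1 - (p.1 + p.2.1 + p.2.2)) / (p.1 * p.2.1 + p.1 * p.2.2 + p.2.1 * p.2.2)
          ≤ 1 / (p.1 * p.2.1 + p.1 * p.2.2 + p.2.1 * p.2.2) := by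
            gcongr
            linarith
        _ ≤ 1 / (p.1 * p.2.1 * p.2.2) ^ ((2:ℝ)/3) := by
            apply one_div_le_one_div_of_le hpow key
        _ = (p.1 * p.2.1 * p.2.2) ^ (-(2:ℝ)/3) := by
            rw [show -(2:ℝ)/3 = -((2:ℝ)/3) by ring, Real.rpow_neg (by positivity), one_div]
    · rw [if_neg hle]
      simp only [norm_zero]
      positivity
  exact Integrable.mono' int_g hmeas hbound
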